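/- arXiv:1107.5478 — 3 statements merged into one kernel-verified Lean document; each statement's English description precedes it below -/
import Mathlib

section
/- Let f : ℝ → ℝ be a convex function, integrable against both the density e^{-πx²} and the uniform density on [-1/2,1/2]. Then ∫ f(x) e^{-πx²} dx ≥ ∫_{-1/2}^{1/2} f(x) dx. -/
open MeasureTheory Real Set

theorem gaussian_dominates_uniform_for_convex_one_dim
    (f : ℝ → ℝ) (hf : ConvexOn ℝ Set.univ f)
    (hint1 : Integrable (fun x => f x * Real.exp (-Real.pi * x ^ 2)) volume)
    (hint2 : IntegrableOn f (Set.Icc (-(1:ℝ)/2) (1/2)) volume) :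
    ∫ x, f x * Real.exp (-Real.pi * x ^ 2) ≥ ∫ x in Set.Icc (-(1:ℝ)/2) (1/2), f x := by
  set c₁ := f (1/2) with hc₁
  set c₂ := f (-(1:ℝ)/2) with hc₂
  set L : ℝ → ℝ := fun x => (1/2 + x) * c₁ + (1/2 - x) * c₂ with hL
  have hin : ∀ x ∈ Icc (-(1:ℝ)/2) (1/2), f x ≤ L x := by
    intro x hx
    obtain ⟨h1, h2⟩ := hx
    have := hf.2 (mem_univ (-(1:ℝ)/2)) (mem_univ (1/2))
      (show (0:ℝ) ≤ 1/2 - x by linarith) (show (0:ℝ) ≤ 1/2 + x by linarith)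
      (show (1/2 - x) + (1/2 + x) = 1 by ring)
    simp only [smul_eq_mul] at this
    have hx' : (1/2 - x) * (-(1:ℝ)/2) + (1/2 + x) * (1/2) = x := by ring
    rw [hx'] at this
    rw [← hc₁, ← hc₂] at this
    simp only [hL]; linarith
  have hout : ∀ x : ℝ, x ∉ Icc (-(1:ℝ)/2) (1/2) → L x ≤ f x := by
    intro x hx
    rw [mem_Icc, not_and_or] at hx
    rcases hx with hx | hx
    · push_neg at hx
      have h := hf.slope_mono_adjacent (mem_univ x) (mem_univ (1/2))
        (y := -(1:ℝ)/2) (by linarith) (by norm_num)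
      have hd : (0:ℝ) < -(1:ℝ)/2 - x := by linarith
      rw [div_le_div_iff₀ hd (by norm_num : (0:ℝ) < 1/2 - -(1:ℝ)/2)] at h
      simp only [hL]; nlinarith
    · push_neg at hx
      have h := hf.slope_mono_adjacent (mem_univ (-(1:ℝ)/2)) (mem_univ x)
        (y := (1:ℝ)/2) (by norm_num) (by linarith)
      have hd : (0:ℝ) < x - 1/2 := by linarith
      rw [div_le_div_iff₀ (by norm_num : (0:ℝ) < 1/2 - -(1:ℝ)/2) hd] at h
      simp only [hL]; nlinarith
  have hLcont : Continuous L := by fun_prop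
  have h0 : Integrable (fun x : ℝ => Real.exp (-Real.pi * x ^ 2)) volume :=
    integrable_exp_neg_mul_sq Real.pi_pos
  have h1 : Integrable (fun x : ℝ => x * Real.exp (-Real.pi * x ^ 2)) volume :=
    integrable_mul_exp_neg_mul_sq Real.pi_pos
  have hLe : Integrable (fun x => L x * Real.exp (-Real.pi * x ^ 2)) volume := by
    have heq : (fun x => L x * Real.exp (-Real.pi * x ^ 2)) =
        fun x => (c₁ + c₂)/2 * Real.exp (-Real.pi * x ^ 2)
          + (c₁ - c₂) * (x * Real.exp (-Real.pi * x ^ 2)) := by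
      funext x; simp only [hL]; ring
    rw [heq]
    exact (h0.const_mul _).add (h1.const_mul _)
  have hLicc : IntegrableOn L (Icc (-(1:ℝ)/2) (1/2)) volume :=
    hLcont.integrableOn_Icc
  have hpt : ∀ x : ℝ,
      (Icc (-(1:ℝ)/2) (1/2)).indicator (fun y => f y - L y) x ≤
        (f x - L x) * Real.exp (-Real.pi * x ^ 2) := by
    intro x
    by_cases hx : x ∈ Icc (-(1:ℝ)/2) (1/2)
    · rw [indicator_of_mem hx]
      have h1' : f x - L x ≤ 0 := by linarith [hin x hx]
      have h2' : Real.exp (-Real.pi * x ^ 2) ≤ 1 := by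
        rw [Real.exp_le_one_iff]
        nlinarith [Real.pi_pos, sq_nonneg x]
      nlinarith [Real.exp_pos (-Real.pi * x ^ 2)]
    · rw [indicator_of_notMem hx]
      have h1' : 0 ≤ f x - L x := by linarith [hout x hx]
      positivity
  have hI1 : Integrable (fun x => (f x - L x) * Real.exp (-Real.pi * x ^ 2)) volume := by
    have heq : (fun x => (f x - L x) * Real.exp (-Real.pi * x ^ 2)) =
        fun x => f x * Real.exp (-Real.pi * x ^ 2) - L x * Real.exp (-Real.pi * x ^ 2) := by
      funext x; ring
    rw [heq]; exact hint1.sub hLe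
  have hI2 : Integrable ((Icc (-(1:ℝ)/2) (1/2)).indicator (fun y => f y - L y)) volume := by
    rw [integrable_indicator_iff measurableSet_Icc]
    exact hint2.sub hLicc
  have key : ∫ x, (Icc (-(1:ℝ)/2) (1/2)).indicator (fun y => f y - L y) x ≤
      ∫ x, (f x - L x) * Real.exp (-Real.pi * x ^ 2) :=
    integral_mono hI2 hI1 hpt
  rw [integral_indicator measurableSet_Icc] at key
  have hgauss : ∫ x : ℝ, Real.exp (-Real.pi * x ^ 2) = 1 := by
    rw [integral_gaussian, div_self Real.pi_pos.ne', Real.sqrt_one]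
  have hodd : ∫ x : ℝ, x * Real.exp (-Real.pi * x ^ 2) = 0 := by
    have h := integral_neg_eq_self (fun x : ℝ => x * Real.exp (-Real.pi * x ^ 2)) volume
    simp only [neg_sq, neg_mul, integral_neg] at h
    have h' : ∫ x : ℝ, x * Real.exp (-Real.pi * x ^ 2)
        = ∫ x : ℝ, x * Real.exp (-(Real.pi * x ^ 2)) := by
      congr 1; funext x; rw [neg_mul]
    rw [h']
    linarith
  have hLgauss : ∫ x, L x * Real.exp (-Real.pi * x ^ 2) = (c₁ + c₂)/2 := by
    have heq : (fun x => L x * Real.exp (-Real.pi * x ^ 2)) =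
        fun x => (c₁ + c₂)/2 * Real.exp (-Real.pi * x ^ 2)
          + (c₁ - c₂) * (x * Real.exp (-Real.pi * x ^ 2)) := by
      funext x; simp only [hL]; ring
    rw [heq, integral_add ((h0.const_mul _)) ((h1.const_mul _)),
      integral_const_mul, integral_const_mul, hgauss, hodd]
    ring
  have hLicc' : ∫ x in Icc (-(1:ℝ)/2) (1/2), L x = (c₁ + c₂)/2 := by
    rw [integral_Icc_eq_integral_Ioc,
      ← intervalIntegral.integral_of_le (by norm_num : -(1:ℝ)/2 ≤ 1/2)]
    have heq : L = fun x => (c₁ + c₂)/2 + (c₁ - c₂) * x := by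
      funext x; simp only [hL]; ring
    simp only [heq]
    rw [intervalIntegral.integral_add intervalIntegrable_const
      ((by fun_prop : Continuous fun x : ℝ => (c₁ - c₂) * x).intervalIntegrable _ _),
      intervalIntegral.integral_const, intervalIntegral.integral_const_mul, integral_id]
    simp only [smul_eq_mul]
    norm_num
  have hsplit1 : ∫ x, (f x - L x) * Real.exp (-Real.pi * x ^ 2) =
      (∫ x, f x * Real.exp (-Real.pi * x ^ 2)) - (c₁ + c₂)/2 := by
    have heq : (fun x => (f x - L x) * Real.exp (-Real.pi * x ^ 2)) =
        fun x => f x * Real.exp (-Real.pi * x ^ 2) - L x * Real.exp (-Real.pi * x ^ 2) := by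
      funext x; ring
    rw [heq, integral_sub hint1 hLe, hLgauss]
  have hsplit2 : ∫ x in Icc (-(1:ℝ)/2) (1/2), (f x - L x) =
      (∫ x in Icc (-(1:ℝ)/2) (1/2), f x) - (c₁ + c₂)/2 := by
    rw [integral_sub hint2 hLicc, hLicc']
  rw [hsplit1, hsplit2] at key
  linarith
end

section
/- Let A, B ⊆ ℝⁿ be centrally symmetric convex bodies. Then the covering number N(A,B) satisfies N(A,B) ≤ 3ⁿ · vol(A) / vol(A ∩ B), where N(A,B) is the minimum number of translates of B needed to cover A. -/
open MeasureTheory Set Pointwise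

theorem covering_number_volume_bound
    (n : ℕ) (A B : Set (EuclideanSpace ℝ (Fin n)))
    (hA : Convex ℝ A) (hAc : IsCompact A) (hA0 : (0 : EuclideanSpace ℝ (Fin n)) ∈ interior A)
    (hAs : A = -A)
    (hB : Convex ℝ B) (hBc : IsCompact B) (hB0 : (0 : EuclideanSpace ℝ (Fin n)) ∈ interior B)
    (hBs : B = -B) :
    ∃ Λ : Finset (EuclideanSpace ℝ (Fin n)),
      (A ⊆ ⋃ x ∈ Λ, (x +ᵥ B)) ∧
      (Λ.card : ENNReal) * volume (A ∩ B) ≤ 3 ^ n * volume A := by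
  classical
  set C : Set (EuclideanSpace ℝ (Fin n)) := A ∩ B with hC
  set D : Set (EuclideanSpace ℝ (Fin n)) := (2⁻¹ : ℝ) • C with hD
  have hCconv : Convex ℝ C := hA.inter hB
  have hCc : IsCompact C := hAc.inter_right hBc.isClosed
  have hC0 : (0 : EuclideanSpace ℝ (Fin n)) ∈ interior C := by
    rw [hC, interior_inter]; exact ⟨hA0, hB0⟩
  have hCsymm : ∀ c ∈ C, -c ∈ C := by
    intro c hc
    have : c ∈ -A ∩ -B := ⟨hAs ▸ hc.1, hBs ▸ hc.2⟩
    exact ⟨by simpa using this.1, by simpa using this.2⟩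
  have hDc : IsCompact D := hCc.smul (2⁻¹ : ℝ)
  -- difference of two elements of D lies in C
  have hDD : ∀ d₁ ∈ D, ∀ d₂ ∈ D, d₁ - d₂ ∈ C := by
    rintro _ ⟨c₁, hc₁, rfl⟩ _ ⟨c₂, hc₂, rfl⟩
    have h2 : (2⁻¹ : ℝ) • c₁ - (2⁻¹ : ℝ) • c₂ = (2⁻¹ : ℝ) • c₁ + (2⁻¹ : ℝ) • (-c₂) := by
      module
    rw [h2]
    exact hCconv hc₁ (hCsymm _ hc₂) (by norm_num) (by norm_num) (by norm_num)
  -- translates of D by points of A lie in (3/2) • A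
  have hsub : ∀ x ∈ A, (x +ᵥ D) ⊆ ((3 / 2 : ℝ) • A) := by
    rintro x hx _ ⟨d, ⟨c, hc, rfl⟩, rfl⟩
    refine ⟨(2 / 3 : ℝ) • x + (1 / 3 : ℝ) • c, hA hx hc.1 (by norm_num : (0:ℝ) ≤ 2/3) (by norm_num : (0:ℝ) ≤ 1/3) (by norm_num), ?_⟩
    show (3 / 2 : ℝ) • ((2 / 3 : ℝ) • x + (1 / 3 : ℝ) • c) = x + (2⁻¹ : ℝ) • c
    module
  -- the packing predicate
  set P : Finset (EuclideanSpace ℝ (Fin n)) → Prop := fun S =>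
    (↑S : Set (EuclideanSpace ℝ (Fin n))) ⊆ A ∧ (↑S : Set (EuclideanSpace ℝ (Fin n))).Pairwise fun x y => Disjoint (x +ᵥ D) (y +ᵥ D) with hP
  have hDvol : volume D = ENNReal.ofReal ((2⁻¹ : ℝ) ^ n) * volume C := by
    rw [hD, Measure.addHaar_smul_of_nonneg volume (by norm_num : (0:ℝ) ≤ 2⁻¹)]
    congr 2
    simp [finrank_euclideanSpace]
  have hDpos : 0 < volume D := by
    have hop : IsOpen ((2⁻¹ : ℝ) • interior C) := isOpen_interior.smul₀ (by norm_num)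
    have hne : ((2⁻¹ : ℝ) • interior C).Nonempty := ⟨_, smul_mem_smul_set hC0⟩
    exact lt_of_lt_of_le (hop.measure_pos volume hne)
      (measure_mono (smul_set_mono interior_subset))
  -- volume bound on packings
  have hAvol : volume ((3 / 2 : ℝ) • A) < ⊤ := ((hAc.smul (3/2 : ℝ)).measure_lt_top)
  have hpack : ∀ S : Finset (EuclideanSpace ℝ (Fin n)), P S →
      (S.card : ENNReal) * volume D ≤ volume ((3 / 2 : ℝ) • A) := by
    intro S hS
    have hm : ∀ x ∈ S, MeasurableSet (x +ᵥ D) := fun x _ =>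
      (hDc.vadd x).isClosed.measurableSet
    have := measure_biUnion_finset (μ := volume) hS.2 hm
    calc (S.card : ENNReal) * volume D
        = ∑ x ∈ S, volume (x +ᵥ D) := by
          rw [Finset.sum_congr rfl fun x _ => measure_vadd (μ := volume) x D,
            Finset.sum_const, nsmul_eq_mul]
      _ = volume (⋃ x ∈ S, (x +ᵥ D)) := this.symm
      _ ≤ volume ((3 / 2 : ℝ) • A) := by
          refine measure_mono ?_
          exact Set.iUnion₂_subset fun x hx => hsub x (hS.1 hx)
  -- cardinalities of packings are bounded
  have hKbound : ∀ S : Finset (EuclideanSpace ℝ (Fin n)), P S →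
      S.card ≤ Nat.ceil (volume ((3/2:ℝ) • A) / volume D).toReal := by
    intro S hS
    have h1 : (S.card : ENNReal) ≤ volume ((3/2:ℝ) • A) / volume D :=
      ENNReal.le_div_iff_mul_le (Or.inl hDpos.ne') (Or.inl hDc.measure_lt_top.ne) |>.mpr (hpack S hS)
    have h2 : volume ((3/2:ℝ) • A) / volume D ≠ ⊤ :=
      (ENNReal.div_lt_top hAvol.ne hDpos.ne').ne
    have h3 : (S.card : ℝ) ≤ (volume ((3/2:ℝ) • A) / volume D).toReal := by
      have := ENNReal.toReal_mono h2 h1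
      simpa using this
    exact_mod_cast h3.trans (Nat.le_ceil _)
  -- pick a packing of maximal cardinality
  set T : Set ℕ := {k | ∃ S : Finset (EuclideanSpace ℝ (Fin n)), P S ∧ S.card = k} with hT
  have hTne : T.Nonempty := ⟨0, ∅, ⟨by simp, by simp⟩, rfl⟩
  have hTbdd : BddAbove T := by
    refine ⟨Nat.ceil (volume ((3/2:ℝ) • A) / volume D).toReal, ?_⟩
    rintro k ⟨S, hS, rfl⟩
    exact hKbound S hS
  obtain ⟨S, hS, hScard⟩ : ∃ S : Finset (EuclideanSpace ℝ (Fin n)), P S ∧ S.card = sSup T := Nat.sSup_mem hTne hTbdd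
  refine ⟨S, ?_, ?_⟩
  · -- covering property
    intro a ha
    have key : ∃ x ∈ S, a - x ∈ C := by
      by_cases haS : a ∈ S
      · exact ⟨a, haS, by simpa using interior_subset hC0⟩
      by_cases hdisj : ∀ x ∈ S, Disjoint (a +ᵥ D) (x +ᵥ D)
      · exfalso
        have hins : P (insert a S) := by
          constructor
          · intro y hy
            rcases Finset.mem_insert.mp (by exact_mod_cast hy) with rfl | hy'
            · exact ha
            · exact hS.1 hy'
          · rw [Finset.coe_insert]
            refine (haveI : Std.Symm (fun x y : EuclideanSpace ℝ (Fin n) => Disjoint (x +ᵥ D) (y +ᵥ D)) := ⟨fun x y h => h.symm⟩; Set.pairwise_insert_of_symm).mpr ⟨hS.2, ?_⟩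
            intro x hx _
            exact hdisj x hx
        have : (insert a S).card ∈ T := ⟨insert a S, hins, rfl⟩
        have hle := le_csSup hTbdd this
        rw [Finset.card_insert_of_notMem haS, ← hScard] at hle
        omega
      · push_neg at hdisj
        obtain ⟨x, hxS, hnd⟩ := hdisj
        obtain ⟨z, hz1, hz2⟩ := Set.not_disjoint_iff.mp hnd
        obtain ⟨d₁, hd₁, rfl⟩ := hz1
        obtain ⟨d₂, hd₂, hz⟩ := hz2
        refine ⟨x, hxS, ?_⟩
        have hax : a - x = d₂ - d₁ := by
          rw [sub_eq_sub_iff_add_eq_add]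
          have : x + d₂ = a + d₁ := hz
          rw [← this, add_comm]
        rw [hax]
        exact hDD d₂ hd₂ d₁ hd₁
    obtain ⟨x, hxS, hax⟩ := key
    refine Set.mem_biUnion hxS ?_
    exact ⟨a - x, hax.2, by simp⟩
  · -- the volume inequality
    have h1 := hpack S hS
    rw [hDvol] at h1
    have hAvol2 : volume ((3/2:ℝ) • A) = ENNReal.ofReal ((3/2:ℝ) ^ n) * volume A := by
      rw [Measure.addHaar_smul_of_nonneg volume (by norm_num : (0:ℝ) ≤ 3/2)]
      congr 2
      simp [finrank_euclideanSpace]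
    rw [hAvol2] at h1
    have h2 := mul_le_mul_right h1 (ENNReal.ofReal ((2:ℝ) ^ n))
    have e1 : ENNReal.ofReal ((2:ℝ)^n) * ((S.card : ENNReal) * (ENNReal.ofReal ((2⁻¹:ℝ)^n) * volume C))
        = (S.card : ENNReal) * volume C := by
      rw [← mul_assoc, mul_comm (ENNReal.ofReal ((2:ℝ)^n)) (S.card : ENNReal), mul_assoc,
        ← mul_assoc (ENNReal.ofReal ((2:ℝ)^n)), ← ENNReal.ofReal_mul (by positivity),
        ← mul_pow]
      norm_num
    have e2 : ENNReal.ofReal ((2:ℝ)^n) * (ENNReal.ofReal ((3/2:ℝ)^n) * volume A)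
        = (3:ENNReal)^n * volume A := by
      rw [← mul_assoc, ← ENNReal.ofReal_mul (by positivity), ← mul_pow]
      norm_num
    rw [e1, e2] at h2
    exact h2
end

section
/- Let K ⊆ ℝⁿ be a centrally symmetric convex body, and suppose an ellipsoid E satisfies vol(E ∩ K) ≥ vol(E)/2 and vol(K) ≤ Cⁿ·vol(E ∩ K) for some C ≥ 1. Then N(K,E) ≤ (3C)ⁿ and N(E,K) ≤ 2·3ⁿ, where N(A,B) is the minimal number of translates of B needed to cover A. -/
open MeasureTheory Set Pointwise

theorem cover_lemma (n : ℕ) (A D : Set (EuclideanSpace ℝ (Fin n)))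
    (hA : Convex ℝ A) (hAc : IsCompact A)
    (hDc : IsCompact D) (hDconv : Convex ℝ D) (hDs : D = -D)
    (hD0 : (0 : EuclideanSpace ℝ (Fin n)) ∈ D) (hDA : D ⊆ A)
    (hDpos : 0 < volume D) :
    ∃ Λ : Finset (EuclideanSpace ℝ (Fin n)),
      (A ⊆ ⋃ x ∈ Λ, (x +ᵥ D)) ∧
      (Λ.card : ENNReal) * volume D ≤ ENNReal.ofReal (3 ^ n) * volume A := by
  classical
  set halfD : Set (EuclideanSpace ℝ (Fin n)) := (2⁻¹ : ℝ) • D with hhalfD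
  have hhalfc : IsCompact halfD := by rw [hhalfD]; exact hDc.smul _
  have hhalfm : MeasurableSet halfD := hhalfc.isClosed.measurableSet
  -- packing predicate
  set P : Finset (EuclideanSpace ℝ (Fin n)) → Prop :=
    fun s => ↑s ⊆ A ∧ (↑s : Set (EuclideanSpace ℝ (Fin n))).PairwiseDisjoint (fun x => x +ᵥ halfD) with hP
  -- volume of halfD
  have hvolhalf : volume halfD = ENNReal.ofReal ((2:ℝ)⁻¹ ^ n) * volume D := by
    rw [hhalfD, Measure.addHaar_smul, finrank_euclideanSpace_fin, abs_of_nonneg (by positivity)]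
  -- big set
  have hbig : A + halfD ⊆ ((3:ℝ)/2) • A := by
    have h1 : A + halfD ⊆ A + (2⁻¹ : ℝ) • A := by
      apply Set.add_subset_add_left
      exact Set.smul_set_mono hDA
    refine h1.trans ?_
    have := hA.add_smul (by norm_num : (0:ℝ) ≤ 1) (by norm_num : (0:ℝ) ≤ 2⁻¹)
    rw [show (1:ℝ) + 2⁻¹ = 3/2 by norm_num, one_smul] at this
    rw [this]
  have hvolbig : volume (((3:ℝ)/2) • A) = ENNReal.ofReal (((3:ℝ)/2) ^ n) * volume A := by
    rw [Measure.addHaar_smul, finrank_euclideanSpace_fin, abs_of_nonneg (by positivity)]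
  -- step 1 : any packing satisfies the card bound
  have step1 : ∀ s : Finset (EuclideanSpace ℝ (Fin n)), P s →
      (s.card : ENNReal) * volume D ≤ ENNReal.ofReal (3 ^ n) * volume A := by
    intro s hs
    have hmeas : volume (⋃ x ∈ s, (x +ᵥ halfD)) = s.card * volume halfD := by
      rw [measure_biUnion_finset hs.2 (fun b _ => hhalfm.const_vadd b)]
      simp [measure_vadd]
    have hsub : (⋃ x ∈ s, (x +ᵥ halfD)) ⊆ ((3:ℝ)/2) • A := by
      refine Set.iUnion₂_subset fun x hx => ?_
      refine Set.Subset.trans ?_ hbig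
      intro z hz
      obtain ⟨y, hy, rfl⟩ := hz
      exact Set.add_mem_add (hs.1 hx) hy
    have key : (s.card : ENNReal) * volume halfD ≤ ENNReal.ofReal (((3:ℝ)/2) ^ n) * volume A := by
      rw [← hmeas, ← hvolbig]; exact measure_mono hsub
    rw [hvolhalf, ← mul_assoc] at key
    have key2 := mul_le_mul_left key (ENNReal.ofReal ((2:ℝ) ^ n))
    have hone : ENNReal.ofReal ((2:ℝ)⁻¹ ^ n) * ENNReal.ofReal ((2:ℝ) ^ n) = 1 := by
      rw [← ENNReal.ofReal_mul (by positivity), ← mul_pow]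
      norm_num
    calc (s.card : ENNReal) * volume D
        = (s.card : ENNReal) * ENNReal.ofReal ((2:ℝ)⁻¹ ^ n) * volume D
            * ENNReal.ofReal ((2:ℝ) ^ n) := by
          rw [show (s.card : ENNReal) * ENNReal.ofReal ((2:ℝ)⁻¹ ^ n) * volume D
              * ENNReal.ofReal ((2:ℝ) ^ n)
              = (s.card : ENNReal) * volume D
                * (ENNReal.ofReal ((2:ℝ)⁻¹ ^ n) * ENNReal.ofReal ((2:ℝ) ^ n)) by ring,
            hone, mul_one]
      _ ≤ ENNReal.ofReal (((3:ℝ)/2) ^ n) * volume A * ENNReal.ofReal ((2:ℝ) ^ n) := key2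
      _ = ENNReal.ofReal (3 ^ n) * volume A := by
          rw [show ENNReal.ofReal (((3:ℝ)/2) ^ n) * volume A * ENNReal.ofReal ((2:ℝ) ^ n)
              = ENNReal.ofReal (((3:ℝ)/2) ^ n) * ENNReal.ofReal ((2:ℝ) ^ n) * volume A by ring,
            ← ENNReal.ofReal_mul (by positivity), ← mul_pow]
          norm_num
  -- step 2 : uniform Nat bound on card of packings
  have hDfin : volume D ≠ ⊤ := hDc.measure_lt_top.ne
  have hAfin : volume A ≠ ⊤ := hAc.measure_lt_top.ne
  have hbound : ∀ s : Finset (EuclideanSpace ℝ (Fin n)), P s →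
      s.card ≤ Nat.ceil (ENNReal.ofReal (3 ^ n) * volume A / volume D).toReal := by
    intro s hs
    have h1 := step1 s hs
    have h2 : (s.card : ENNReal) ≤ ENNReal.ofReal (3 ^ n) * volume A / volume D :=
      (ENNReal.le_div_iff_mul_le (Or.inl hDpos.ne') (Or.inl hDfin)).2 h1
    have hfin : ENNReal.ofReal (3 ^ n) * volume A / volume D ≠ ⊤ :=
      (ENNReal.div_lt_top (ENNReal.mul_ne_top ENNReal.ofReal_ne_top hAfin) hDpos.ne').ne
    have h3 : (s.card : ℝ) ≤ (ENNReal.ofReal (3 ^ n) * volume A / volume D).toReal := by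
      have := ENNReal.toReal_mono hfin h2
      simpa using this
    calc s.card = Nat.ceil ((s.card : ℝ)) := by simp
      _ ≤ _ := Nat.ceil_le_ceil h3
  -- step 3 : a maximal packing
  set S : Set ℕ := {k | ∃ s : Finset (EuclideanSpace ℝ (Fin n)), P s ∧ s.card = k} with hS
  have hSne : S.Nonempty := ⟨0, ∅, ⟨by simp, by simp⟩, rfl⟩
  have hSbdd : BddAbove S := by
    refine ⟨Nat.ceil (ENNReal.ofReal (3 ^ n) * volume A / volume D).toReal, ?_⟩
    rintro k ⟨s, hs, rfl⟩
    exact hbound s hs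
  obtain ⟨Λ, hΛP, hΛcard⟩ : ∃ s : Finset (EuclideanSpace ℝ (Fin n)), P s ∧ s.card = sSup S := Nat.sSup_mem hSne hSbdd
  have hmax : ∀ t : Finset (EuclideanSpace ℝ (Fin n)), P t → t.card ≤ Λ.card := by
    intro t ht
    rw [hΛcard]
    exact le_csSup hSbdd ⟨t, ht, rfl⟩
  refine ⟨Λ, ?_, step1 Λ hΛP⟩
  -- covering
  intro a ha
  by_contra hcov
  simp only [Set.mem_iUnion, not_exists] at hcov
  have haΛ : a ∉ Λ := by
    intro h
    exact hcov a h ⟨0, hD0, by simp⟩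
  have hdisj : ∀ x ∈ Λ, Disjoint (a +ᵥ halfD) (x +ᵥ halfD) := by
    intro x hx
    by_contra hnd
    obtain ⟨z, hz1, hz2⟩ := Set.not_disjoint_iff.1 hnd
    obtain ⟨w1, hw1, hzw1⟩ := hz1
    obtain ⟨w2, hw2, hzw2⟩ := hz2
    obtain ⟨d1, hd1, rfl⟩ := hw1
    obtain ⟨d2, hd2, rfl⟩ := hw2
    have hnegd1 : -d1 ∈ D := by rw [hDs]; exact Set.neg_mem_neg.2 hd1
    have hmem : (2⁻¹:ℝ) • d2 + (2⁻¹:ℝ) • (-d1) ∈ D :=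
      hDconv hd2 hnegd1 (by norm_num) (by norm_num) (by norm_num)
    refine hcov x hx ⟨_, hmem, ?_⟩
    have h1 : a + (2⁻¹:ℝ) • d1 = z := hzw1
    have h2 : x + (2⁻¹:ℝ) • d2 = z := hzw2
    have h3 : a + (2⁻¹:ℝ) • d1 = x + (2⁻¹:ℝ) • d2 := h1.trans h2.symm
    show x + ((2⁻¹:ℝ) • d2 + (2⁻¹:ℝ) • (-d1)) = a
    have h4 : x + ((2⁻¹:ℝ) • d2 + -((2⁻¹:ℝ) • d1)) = (x + (2⁻¹:ℝ) • d2) - (2⁻¹:ℝ) • d1 := by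
      abel
    rw [smul_neg, h4, ← h3]
    abel
  have hPins : P (insert a Λ) := by
    constructor
    · rw [Finset.coe_insert]
      exact Set.insert_subset ha hΛP.1
    · rw [Finset.coe_insert]
      refine hΛP.2.insert fun x hx _ => ?_
      exact hdisj x hx
  have := hmax _ hPins
  rw [Finset.card_insert_of_notMem haΛ] at this
  omega


theorem covering_from_volume_estimates
    (n : ℕ) (K E : Set (EuclideanSpace ℝ (Fin n)))
    (hK : Convex ℝ K) (hKc : IsCompact K)
    (hK0 : (0 : EuclideanSpace ℝ (Fin n)) ∈ interior K) (hKs : K = -K)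
    (T : EuclideanSpace ℝ (Fin n) ≃L[ℝ] EuclideanSpace ℝ (Fin n))
    (hE : E = T '' Metric.closedBall 0 1)
    (C : ℝ) (hC : 1 ≤ C)
    (hvol1 : volume (E ∩ K) ≥ volume E / 2)
    (hvol2 : volume K ≤ (ENNReal.ofReal C) ^ n * volume (E ∩ K)) :
    (∃ Λ : Finset (EuclideanSpace ℝ (Fin n)),
      (K ⊆ ⋃ x ∈ Λ, (x +ᵥ E)) ∧ (Λ.card : ℝ) ≤ (3 * C) ^ n) ∧
    (∃ Λ : Finset (EuclideanSpace ℝ (Fin n)),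
      (E ⊆ ⋃ x ∈ Λ, (x +ᵥ K)) ∧ (Λ.card : ℝ) ≤ 2 * 3 ^ n) := by
  have hEc : IsCompact E := hE ▸ (isCompact_closedBall (0:EuclideanSpace ℝ (Fin n)) 1).image T.continuous
  have hEconv : Convex ℝ E := hE ▸ (convex_closedBall (0:EuclideanSpace ℝ (Fin n)) 1).linear_image T.toLinearEquiv.toLinearMap
  have hE0 : (0 : EuclideanSpace ℝ (Fin n)) ∈ E := hE ▸ ⟨0, by simp, map_zero T⟩
  have hEs : E = -E := by
    rw [hE]; ext z
    simp only [Set.mem_neg, Set.mem_image, Metric.mem_closedBall, dist_zero_right]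
    constructor
    · rintro ⟨y, hy, hyz⟩
      exact ⟨-y, by simpa using hy, by simp [map_neg, hyz]⟩
    · rintro ⟨y, hy, hyz⟩
      exact ⟨-y, by simpa using hy, by simp [map_neg, hyz]⟩
  set D : Set (EuclideanSpace ℝ (Fin n)) := E ∩ K with hD
  have hDc : IsCompact D := hEc.inter_right hKc.isClosed
  have hDconv : Convex ℝ D := hEconv.inter hK
  have hkey : ∀ z, z ∈ D → -z ∈ D := by
    rintro z ⟨h1, h2⟩
    constructor
    · rw [hEs]; exact Set.neg_mem_neg.2 h1
    · rw [hKs]; exact Set.neg_mem_neg.2 h2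
  have hDs : D = -D := by
    ext z
    rw [Set.mem_neg]
    exact ⟨fun h => by simpa using hkey z h, fun h => by simpa using hkey (-z) h⟩
  have hD0 : (0 : EuclideanSpace ℝ (Fin n)) ∈ D := ⟨hE0, interior_subset hK0⟩
  have hEpos : 0 < volume E := by
    have hopen : IsOpen (T '' Metric.ball 0 1) := T.toHomeomorph.isOpenMap _ Metric.isOpen_ball
    have hne : (T '' Metric.ball 0 1).Nonempty := ⟨T 0, 0, by simp, rfl⟩
    refine lt_of_lt_of_le (hopen.measure_pos volume hne) (measure_mono ?_)
    rw [hE]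
    exact Set.image_mono Metric.ball_subset_closedBall
  have hDpos : 0 < volume D :=
    lt_of_lt_of_le (ENNReal.div_pos hEpos.ne' (by norm_num)) hvol1
  have hDfin : volume D ≠ ⊤ := hDc.measure_lt_top.ne
  have hEfin : volume E ≠ ⊤ := hEc.measure_lt_top.ne
  constructor
  · -- N(K, E) ≤ (3C)^n
    obtain ⟨Λ, hcov, hcard⟩ := cover_lemma n K D hK hKc hDc hDconv hDs hD0
      Set.inter_subset_right hDpos
    refine ⟨Λ, ?_, ?_⟩
    · refine hcov.trans (Set.iUnion₂_mono fun x _ => ?_)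
      exact Set.vadd_set_mono Set.inter_subset_left
    · have h1 : (Λ.card : ENNReal) * volume D ≤ ENNReal.ofReal ((3 * C) ^ n) * volume D := by
        refine hcard.trans ?_
        calc ENNReal.ofReal (3 ^ n) * volume K
            ≤ ENNReal.ofReal (3 ^ n) * ((ENNReal.ofReal C) ^ n * volume D) :=
              mul_le_mul_right hvol2 _
          _ = ENNReal.ofReal ((3 * C) ^ n) * volume D := by
              rw [← ENNReal.ofReal_pow (by linarith), ← mul_assoc,
                ← ENNReal.ofReal_mul (by positivity), ← mul_pow]
      have h2 : (Λ.card : ENNReal) ≤ ENNReal.ofReal ((3 * C) ^ n) :=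
        (ENNReal.mul_le_mul_iff_left hDpos.ne' hDfin).1 h1
      rw [← ENNReal.ofReal_natCast Λ.card] at h2
      exact (ENNReal.ofReal_le_ofReal_iff (by positivity)).1 h2
  · -- N(E, K) ≤ 2 * 3^n
    obtain ⟨Λ, hcov, hcard⟩ := cover_lemma n E D hEconv hEc hDc hDconv hDs hD0
      Set.inter_subset_left hDpos
    refine ⟨Λ, ?_, ?_⟩
    · refine hcov.trans (Set.iUnion₂_mono fun x _ => ?_)
      exact Set.vadd_set_mono Set.inter_subset_right
    · have hE2 : volume E ≤ volume D * 2 := by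
        refine (ENNReal.div_le_iff_le_mul (Or.inl (by norm_num)) (Or.inl (by norm_num))).1 hvol1
      have h1 : (Λ.card : ENNReal) * volume D ≤ ENNReal.ofReal (2 * 3 ^ n) * volume D := by
        refine hcard.trans ?_
        calc ENNReal.ofReal (3 ^ n) * volume E
            ≤ ENNReal.ofReal (3 ^ n) * (volume D * 2) := mul_le_mul_right hE2 _
          _ = ENNReal.ofReal (2 * 3 ^ n) * volume D := by
              rw [ENNReal.ofReal_mul (by norm_num), ENNReal.ofReal_ofNat]
              ring
      have h2 : (Λ.card : ENNReal) ≤ ENNReal.ofReal (2 * 3 ^ n) :=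
        (ENNReal.mul_le_mul_iff_left hDpos.ne' hDfin).1 h1
      rw [← ENNReal.ofReal_natCast Λ.card] at h2
      exact (ENNReal.ofReal_le_ofReal_iff (by positivity)).1 h2
end
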